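/- Let T be a triangulated category, let X be a triangulated subcategory of T, and set F = X * X^⊥, G = (^⊥X) * X, and U = F ∩ G. Then ((^⊥X) ∩ F, X) is a stable t-structure in U. -/

import Mathlib

namespace Paper

open CategoryTheory Limits Triangulated Pretriangulated ZeroObject

universe w v u

variable {C : Type u} [Category.{v} C] [HasZeroObject C] [Preadditive C] [HasShift C ℤ]
  [∀ n : ℤ, (shiftFunctor C n).Additive] [Pretriangulated C]

/-- The subcategory of extensions `X * Y`: objects `e` admitting a distinguished triangle
`x ⟶ e ⟶ y ⟶ x⟦1⟧` with `x ∈ X` and `y ∈ Y`. -/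
def star (X Y : Set C) : Set C :=
  {e | ∃ (x y : C) (_ : x ∈ X) (_ : y ∈ Y) (f : x ⟶ e) (g : e ⟶ y) (h : y ⟶ x⟦(1 : ℤ)⟧),
    Triangle.mk f g h ∈ distTriang C}

/-- A (strictly full) triangulated subcategory: a class of objects containing `0`, closed
under isomorphisms, suspension, desuspension and extensions. -/
structure IsTriangulatedSubcat (S : Set C) : Prop where
  zero_mem : (0 : C) ∈ S
  mem_of_iso : ∀ {a b : C}, (a ≅ b) → a ∈ S → b ∈ S
  shift_mem : ∀ {a : C}, a ∈ S → a⟦(1 : ℤ)⟧ ∈ S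
  unshift_mem : ∀ {a : C}, a ∈ S → a⟦(-1 : ℤ)⟧ ∈ S
  ext₂ : ∀ {a e b : C} (f : a ⟶ e) (g : e ⟶ b) (h : b ⟶ a⟦(1 : ℤ)⟧),
    (Triangle.mk f g h ∈ distTriang C) → a ∈ S → b ∈ S → e ∈ S

/-- A thick subcategory: a triangulated subcategory closed under direct summands
(equivalently, retracts). -/
structure IsThickSubcat (S : Set C) extends IsTriangulatedSubcat S : Prop where
  mem_of_retract : ∀ {a s : C}, s ∈ S → (∃ (i : a ⟶ s) (p : s ⟶ a), i ≫ p = 𝟙 a) → a ∈ S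

/-- `(U, V)` is a stable t-structure in the (triangulated sub)category whose class of
objects is `S`: both are triangulated subcategories contained in `S`, `Hom(U, V) = 0`
and `U * V = S`. -/
structure IsStableTStructureIn (S U V : Set C) : Prop where
  subsetU : U ⊆ S
  subsetV : V ⊆ S
  triU : IsTriangulatedSubcat U
  triV : IsTriangulatedSubcat V
  hom_zero : ∀ {u v : C}, u ∈ U → v ∈ V → ∀ f : u ⟶ v, f = 0
  star_eq : star U V = S

lemma IsTriangulatedSubcat.shift_all {S : Set C} (hS : IsTriangulatedSubcat S) (a : C) (n : ℤ)
    (ha : a ∈ S) : a⟦n⟧ ∈ S := by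
  induction n using Int.induction_on with
  | zero => exact hS.mem_of_iso ((shiftFunctorZero C ℤ).app a).symm ha
  | succ i hi =>
      exact hS.mem_of_iso ((shiftFunctorAdd' C (i : ℤ) 1 ((i : ℤ) + 1) rfl).app a).symm
        (hS.shift_mem hi)
  | pred i hi =>
      exact hS.mem_of_iso
        ((shiftFunctorAdd' C (-(i : ℤ)) (-1) (-(i : ℤ) - 1) (by ring)).app a).symm
        (hS.unshift_mem hi)

/-- The Mathlib `Triangulated.Subcategory` associated to a class of objects satisfying
`IsTriangulatedSubcat`. -/
def IsTriangulatedSubcat.toSubcategory {S : Set C} (hS : IsTriangulatedSubcat S) :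
    ObjectProperty C :=
  fun a => a ∈ S

lemma IsTriangulatedSubcat.inter {X Y : Set C} (hX : IsTriangulatedSubcat X)
    (hY : IsTriangulatedSubcat Y) : IsTriangulatedSubcat (X ∩ Y) where
  zero_mem := ⟨hX.zero_mem, hY.zero_mem⟩
  mem_of_iso := fun e h => ⟨hX.mem_of_iso e h.1, hY.mem_of_iso e h.2⟩
  shift_mem := fun h => ⟨hX.shift_mem h.1, hY.shift_mem h.2⟩
  unshift_mem := fun h => ⟨hX.unshift_mem h.1, hY.unshift_mem h.2⟩
  ext₂ := fun f g h hT ha hb => ⟨hX.ext₂ f g h hT ha.1 hb.1, hY.ext₂ f g h hT ha.2 hb.2⟩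

/-- The Verdier quotient of `C` by the triangulated subcategory `S`. -/
abbrev VerdierQuotient {S : Set C} (hS : IsTriangulatedSubcat S) : Type _ :=
  hS.toSubcategory.trW.Localization

/-- The Verdier quotient functor. -/
noncomputable abbrev Vq {S : Set C} (hS : IsTriangulatedSubcat S) : C ⥤ VerdierQuotient hS :=
  hS.toSubcategory.trW.Q

/-- The essential image of a class of objects under a functor (the closure under
isomorphisms of the image). -/
def QSet {D : Type*} [Category D] (L : C ⥤ D) (S : Set C) : Set D :=
  {d | ∃ s ∈ S, Nonempty (L.obj s ≅ d)}

/-- The right perpendicular class `X^⊥`. -/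
def rightPerp (X : Set C) : Set C := {t | ∀ {x : C}, x ∈ X → ∀ f : x ⟶ t, f = 0}

/-- The left perpendicular class `^⊥X`. -/
def leftPerp (X : Set C) : Set C := {t | ∀ {x : C}, x ∈ X → ∀ f : t ⟶ x, f = 0}


-- Auxiliary lemmas


lemma mem_star {A B : Set C} (T : Triangle C) (hT : T ∈ distTriang C)
    (h1 : T.obj₁ ∈ A) (h3 : T.obj₃ ∈ B) : T.obj₂ ∈ star A B :=
  ⟨T.obj₁, T.obj₃, h1, h3, T.mor₁, T.mor₂, T.mor₃, hT⟩

lemma star_mono {A A' B B' : Set C} (hA : A ⊆ A') (hB : B ⊆ B') : star A B ⊆ star A' B' := by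
  rintro e ⟨x, y, hx, hy, f, g, h, hT⟩
  exact ⟨x, y, hA hx, hB hy, f, g, h, hT⟩

lemma star_self {B : Set C} (hB : IsTriangulatedSubcat B) : star B B ⊆ B := by
  rintro e ⟨x, y, hx, hy, f, g, h, hT⟩
  exact hB.ext₂ f g h hT hx hy

lemma star_subset {A B S : Set C} (hS : IsTriangulatedSubcat S) (hA : A ⊆ S) (hB : B ⊆ S) :
    star A B ⊆ S := fun _ he => star_self hS (star_mono hA hB he)

lemma mem_star_left {A B : Set C} (hB0 : (0 : C) ∈ B) {x : C} (hx : x ∈ A) : x ∈ star A B :=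
  mem_star (contractibleTriangle x) (contractible_distinguished x) hx hB0

lemma mem_star_right {A B : Set C} (hA : IsTriangulatedSubcat A) {y : C} (hy : y ∈ B) :
    y ∈ star A B :=
  mem_star (contractibleTriangle y).invRotate
    (inv_rot_of_distTriang _ (contractible_distinguished y))
    (hA.unshift_mem hA.zero_mem) hy

lemma star_shift {A B : Set C} (hA : IsTriangulatedSubcat A) (hB : IsTriangulatedSubcat B)
    {e : C} (he : e ∈ star A B) (n : ℤ) : e⟦n⟧ ∈ star A B := by
  obtain ⟨x, y, hx, hy, f, g, h, hT⟩ := he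
  exact mem_star _ (Triangle.shift_distinguished _ hT n) (hA.shift_all x n hx)
    (hB.shift_all y n hy)

lemma star_iso {A B : Set C} {e e' : C} (i : e ≅ e') (he : e ∈ star A B) : e' ∈ star A B := by
  obtain ⟨x, y, hx, hy, f, g, h, hT⟩ : ∃ (x y : C) (_ : x ∈ A) (_ : y ∈ B) (f : x ⟶ e) (g : e ⟶ y)
    (h : y ⟶ x⟦(1 : ℤ)⟧), Triangle.mk f g h ∈ distTriang C := he
  refine ⟨x, y, hx, hy, f ≫ i.hom, i.inv ≫ g, h,
    isomorphic_distinguished _ hT _ ?_⟩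
  exact Triangle.isoMk _ _ (Iso.refl x) i.symm (Iso.refl y)
    (by show (f ≫ i.hom) ≫ i.inv = 𝟙 x ≫ f; simp) (by show (i.inv ≫ g) ≫ 𝟙 y = i.inv ≫ g; simp)
    (by show h ≫ (shiftFunctor C (1 : ℤ)).map (𝟙 x) = 𝟙 y ≫ h; simp)

lemma star_swap {A B : Set C}
    (hz : ∀ ⦃a : C⦄, a ∈ A → ∀ ⦃b : C⦄, b ∈ B → ∀ f : a ⟶ b⟦(1 : ℤ)⟧, f = 0) :
    star B A ⊆ star A B := by
  intro e he
  obtain ⟨b, a, hb, ha, f, g, h, hT⟩ : ∃ (x y : C) (_ : x ∈ B) (_ : y ∈ A) (f : x ⟶ e) (g : e ⟶ y)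
    (h : y ⟶ x⟦(1 : ℤ)⟧), Triangle.mk f g h ∈ distTriang C := he
  have h0 : h = 0 := hz ha hb h
  rw [h0] at hT
  obtain ⟨i, -, -⟩ : ∃ (i : e ≅ b ⊞ a), True ∧ True :=
    let ⟨i, _, _⟩ := exists_iso_binaryBiproduct_of_distTriang _ hT rfl; ⟨i, trivial, trivial⟩
  refine ⟨a, b, ha, hb, biprod.inr ≫ i.inv, i.hom ≫ biprod.fst, 0,
    isomorphic_distinguished _ (binaryBiproductTriangle_distinguished a b) _ ?_⟩
  exact Triangle.isoMk _ _ (Iso.refl a) (i ≪≫ biprod.braiding b a) (Iso.refl b)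
    (by show (biprod.inr ≫ i.inv) ≫ (i ≪≫ biprod.braiding b a).hom = 𝟙 a ≫ biprod.inl
        apply biprod.hom_ext <;> simp) (by show (i.hom ≫ biprod.fst) ≫ 𝟙 b = (i ≪≫ biprod.braiding b a).hom ≫ biprod.snd; simp)
    (by show (0 : b ⟶ a⟦(1 : ℤ)⟧) ≫ (shiftFunctor C (1 : ℤ)).map (𝟙 a) = 𝟙 b ≫ 0; simp)

section Assoc

variable [IsTriangulated C]

lemma star_assoc₁ {A B S : Set C} (hA : IsTriangulatedSubcat A) (hB : IsTriangulatedSubcat B) :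
    star A (star B S) ⊆ star (star A B) S := by
  rintro e ⟨a, m, ha, ⟨b, c, hb, hc, f', g', h', hT'⟩, f, g, h, hT⟩
  obtain ⟨z, v, w, hz⟩ := distinguished_cocone_triangle (g ≫ g')
  have h12 : Triangle.mk g h (-(f⟦(1 : ℤ)⟧')) ∈ distTriang C := rot_of_distTriang _ hT
  have h23 : Triangle.mk g' h' (-(f'⟦(1 : ℤ)⟧')) ∈ distTriang C := rot_of_distTriang _ hT'
  have H := someOctahedron rfl h12 h23 hz
  have hzmem : z ∈ star A B := ⟨a⟦(1 : ℤ)⟧, b⟦(1 : ℤ)⟧, hA.shift_mem ha, hB.shift_mem hb,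
    H.m₁, H.m₃, _, H.mem⟩
  exact mem_star (Triangle.mk (g ≫ g') v w).invRotate (inv_rot_of_distTriang _ hz)
    (star_shift hA hB hzmem (-1)) hc

lemma star_assoc₂ {A B S : Set C} : star (star A B) S ⊆ star A (star B S) := by
  rintro e ⟨m, c, ⟨a, b, ha, hb, f', g', h', hT'⟩, hc, f, g, h, hT⟩
  obtain ⟨z, v, w, hz⟩ := distinguished_cocone_triangle (f' ≫ f)
  have H := someOctahedron rfl hT' hT hz
  exact ⟨a, z, ha, ⟨b, c, hb, hc, H.m₁, H.m₃, _, H.mem⟩, f' ≫ f, v, w, hz⟩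

lemma star_tri {A B : Set C} (hA : IsTriangulatedSubcat A) (hB : IsTriangulatedSubcat B)
    (hz0 : ∀ ⦃a : C⦄, a ∈ A → ∀ ⦃b : C⦄, b ∈ B → ∀ f : a ⟶ b, f = 0) :
    IsTriangulatedSubcat (star A B) := by
  have hz : ∀ ⦃a : C⦄, a ∈ A → ∀ ⦃b : C⦄, b ∈ B → ∀ f : a ⟶ b⟦(1 : ℤ)⟧, f = 0 :=
    fun a ha b hb f => hz0 ha (hB.shift_mem hb) f
  have key : star B (star A B) ⊆ star A B :=
    (star_assoc₁ hB hA).trans ((star_mono (star_swap hz) subset_rfl).trans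
      (star_assoc₂.trans (star_mono subset_rfl (star_self hB))))
  have key₂ : star A (star A B) ⊆ star A B :=
    (star_assoc₁ hA hA).trans (star_mono (star_self hA) subset_rfl)
  refine ⟨mem_star_left hB.zero_mem hA.zero_mem, fun i he => star_iso i he,
    fun he => star_shift hA hB he 1, fun he => star_shift hA hB he (-1), ?_⟩
  intro e₁ e e₂ f g h hT he₁ he₂
  exact key₂ (star_mono subset_rfl key
    (star_assoc₂ ⟨e₁, e₂, he₁, he₂, f, g, h, hT⟩))

end Assoc

lemma rightPerp_tri {X : Set C} (hX : IsTriangulatedSubcat X) :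
    IsTriangulatedSubcat (rightPerp X) := by
  refine ⟨?_, ?_, ?_, ?_, ?_⟩
  · intro x hx f
    exact (isZero_zero C).eq_of_tgt f 0
  · intro a b i ha x hx f
    have := ha hx (f ≫ i.inv)
    rw [← Category.comp_id f, ← i.inv_hom_id, ← Category.assoc, this, zero_comp]
  · intro t ht x hx f
    have h0 : (shiftFunctor C (-1 : ℤ)).map f ≫
        ((shiftFunctorCompIsoId C (1 : ℤ) (-1 : ℤ) (by ring)).hom.app t) = 0 :=
      ht (hX.unshift_mem hx) _
    have : (shiftFunctor C (-1 : ℤ)).map f = 0 := by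
      rw [← cancel_mono ((shiftFunctorCompIsoId C (1 : ℤ) (-1 : ℤ) (by ring)).hom.app t),
        zero_comp]
      exact h0
    rwa [Functor.map_eq_zero_iff] at this
  · intro t ht x hx f
    have h0 : (shiftFunctor C (1 : ℤ)).map f ≫
        ((shiftFunctorCompIsoId C (-1 : ℤ) (1 : ℤ) (by ring)).hom.app t) = 0 :=
      ht (hX.shift_mem hx) _
    have : (shiftFunctor C (1 : ℤ)).map f = 0 := by
      rw [← cancel_mono ((shiftFunctorCompIsoId C (-1 : ℤ) (1 : ℤ) (by ring)).hom.app t),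
        zero_comp]
      exact h0
    rwa [Functor.map_eq_zero_iff] at this
  · intro a e b f g h hT ha hb x hx φ
    obtain ⟨ψ, hψ⟩ := Triangle.coyoneda_exact₂ _ hT φ (hb hx (φ ≫ g))
    rw [hψ, show ψ = 0 from ha hx ψ]
    exact zero_comp

lemma leftPerp_tri {X : Set C} (hX : IsTriangulatedSubcat X) :
    IsTriangulatedSubcat (leftPerp X) := by
  refine ⟨?_, ?_, ?_, ?_, ?_⟩
  · intro x hx f
    exact (isZero_zero C).eq_of_src f 0
  · intro a b i ha x hx f
    have := ha hx (i.hom ≫ f)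
    rw [← Category.id_comp f, ← i.inv_hom_id, Category.assoc, this, comp_zero]
  · intro t ht x hx f
    have h0 : ((shiftFunctorCompIsoId C (1 : ℤ) (-1 : ℤ) (by ring)).inv.app t) ≫
        (shiftFunctor C (-1 : ℤ)).map f = 0 :=
      ht (hX.unshift_mem hx) _
    have : (shiftFunctor C (-1 : ℤ)).map f = 0 := by
      rw [← cancel_epi ((shiftFunctorCompIsoId C (1 : ℤ) (-1 : ℤ) (by ring)).inv.app t),
        comp_zero]
      exact h0
    rwa [Functor.map_eq_zero_iff] at this
  · intro t ht x hx f
    have h0 : ((shiftFunctorCompIsoId C (-1 : ℤ) (1 : ℤ) (by ring)).inv.app t) ≫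
        (shiftFunctor C (1 : ℤ)).map f = 0 :=
      ht (hX.shift_mem hx) _
    have : (shiftFunctor C (1 : ℤ)).map f = 0 := by
      rw [← cancel_epi ((shiftFunctorCompIsoId C (-1 : ℤ) (1 : ℤ) (by ring)).inv.app t),
        comp_zero]
      exact h0
    rwa [Functor.map_eq_zero_iff] at this
  · intro a e b f g h hT ha hb x hx φ
    obtain ⟨ψ, hψ⟩ := Triangle.yoneda_exact₂ _ hT φ (ha hx (f ≫ φ))
    rw [hψ, show ψ = 0 from hb hx ψ]
    exact comp_zero


variable [IsTriangulated C]

/-- Let `X` be a triangulated subcategory of `C` and set `F = X * X^⊥`, `G = (^⊥X) * X`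
and `U = F ∩ G`.  Then `((^⊥X) ∩ F, X)` is a stable t-structure in `U`. -/
theorem statement15 {X : Set C} (hX : IsTriangulatedSubcat X) :
    IsStableTStructureIn (star X (rightPerp X) ∩ star (leftPerp X) X)
      (leftPerp X ∩ star X (rightPerp X)) X := by
  have hY : IsTriangulatedSubcat (rightPerp X) := rightPerp_tri hX
  have hL : IsTriangulatedSubcat (leftPerp X) := leftPerp_tri hX
  have hF : IsTriangulatedSubcat (star X (rightPerp X)) :=
    star_tri hX hY (fun a ha b hb f => hb ha f)
  have hG : IsTriangulatedSubcat (star (leftPerp X) X) :=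
    star_tri hL hX (fun t ht x hx f => ht hx f)
  have hU : IsTriangulatedSubcat (star X (rightPerp X) ∩ star (leftPerp X) X) := hF.inter hG
  have hsubU : leftPerp X ∩ star X (rightPerp X) ⊆
      star X (rightPerp X) ∩ star (leftPerp X) X := by
    rintro p ⟨hp1, hp2⟩
    exact ⟨hp2, mem_star_left hX.zero_mem hp1⟩
  have hsubV : X ⊆ star X (rightPerp X) ∩ star (leftPerp X) X := by
    intro x hx
    exact ⟨mem_star_left (B := rightPerp X) hY.zero_mem hx, mem_star_right hL hx⟩
  refine ⟨hsubU, hsubV, hL.inter hF, hX, fun hu hv f => hu.1 hv f, ?_⟩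
  apply Set.Subset.antisymm
  · exact star_subset hU hsubU hsubV
  · rintro u ⟨huF, ⟨t, x, ht, hx, f, g, h, hT⟩⟩
    have hT' := inv_rot_of_distTriang _ hT
    have ht2 : t ∈ star X (rightPerp X) :=
      hF.ext₂ ((Triangle.mk f g h).invRotate.mor₁) ((Triangle.mk f g h).invRotate.mor₂)
        ((Triangle.mk f g h).invRotate.mor₃) hT'
        (mem_star_left (B := rightPerp X) hY.zero_mem (hX.unshift_mem hx)) huF
    exact ⟨t, x, ⟨ht, ht2⟩, hx, f, g, h, hT⟩


end Paper
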